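/- Let $\lambda = (1+\sqrt{5})/2$ and let $q \ge 12$ be an integer. With $s = 1.0571/(q \ln 2)$, we have $\lambda^{-2s} + (2^q + \lambda - 1)^{-2s} > 1$. -/
import Mathlib

set_option maxHeartbeats 1000000

theorem stmt_11 (q : ℕ) (hq : 12 ≤ q) :
    let lam : ℝ := (1 + Real.sqrt 5) / 2
    let s : ℝ := 1.0571 / ((q : ℝ) * Real.log 2)
    lam ^ (-(2 * s)) + ((2 : ℝ) ^ q + lam - 1) ^ (-(2 * s)) > 1 := by
  intro lam s
  have hs5 : Real.sqrt 5 ^ 2 = 5 := Real.sq_sqrt (by norm_num)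
  have hs5nn : (0:ℝ) ≤ Real.sqrt 5 := Real.sqrt_nonneg 5
  have h5ub : Real.sqrt 5 < 2.2360680 := by nlinarith
  have h5lb : (2:ℝ) < Real.sqrt 5 := by nlinarith
  have hlam1 : (1:ℝ) < lam := by simp only [lam]; nlinarith
  have hlamub : lam < 1.6180340 := by simp only [lam]; nlinarith
  have hlam0 : (0:ℝ) < lam := by linarith
  have hsq : lam ^ 2 = lam + 1 := by
    simp only [lam]; nlinarith
  have h16 : lam ^ 16 = 987 * lam + 610 := by
    linear_combination (lam^14 + lam^13 + 2*lam^12 + 3*lam^11 + 5*lam^10 + 8*lam^9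
      + 13*lam^8 + 21*lam^7 + 34*lam^6 + 55*lam^5 + 89*lam^4 + 144*lam^3
      + 233*lam^2 + 377*lam + 610) * hsq
  have hlog2lb : (0.6931471803:ℝ) < Real.log 2 := Real.log_two_gt_d9
  have hlog2ub : Real.log 2 < 0.6931471808 := Real.log_two_lt_d9
  have hq' : (12:ℝ) ≤ (q:ℝ) := by exact_mod_cast hq
  -- bound on log lam
  have hloglam_nn : 0 ≤ Real.log lam := Real.log_nonneg (le_of_lt hlam1)
  have hloglam : Real.log lam < 0.4814 := by
    have h1 : Real.log (lam ^ 16) = 16 * Real.log lam := by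
      rw [Real.log_pow]; norm_num
    have h2 : lam ^ 16 < 2207 := by rw [h16]; nlinarith
    have h3 : Real.log (lam ^ 16) < Real.log 2207 :=
      Real.log_lt_log (pow_pos hlam0 16) h2
    have h4 : Real.log 2207 = Real.log 2048 + Real.log (2207 / 2048) := by
      rw [← Real.log_mul (by norm_num) (by norm_num)]
      norm_num
    have h5 : Real.log 2048 = 11 * Real.log 2 := by
      rw [show (2048:ℝ) = 2 ^ 11 by norm_num, Real.log_pow]
      norm_num
    have h6 : Real.log (2207 / 2048) ≤ 2207 / 2048 - 1 :=
      Real.log_le_sub_one_of_pos (by norm_num)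
    linarith
  have hDlb : (8.3177661636:ℝ) ≤ (q:ℝ) * Real.log 2 := by nlinarith
  have hDpos : (0:ℝ) < (q:ℝ) * Real.log 2 := by linarith
  have hs_eq : s = 1.0571 / ((q:ℝ) * Real.log 2) := rfl
  -- first term
  have hx_def : lam ^ (-(2 * s)) = Real.exp (Real.log lam * (-(2 * s))) :=
    Real.rpow_def_of_pos hlam0 _
  have hx_ub : Real.log lam * (2 * s) ≤ 0.1224 := by
    have e : Real.log lam * (2 * s) =
        (2.1142 * Real.log lam) / ((q:ℝ) * Real.log 2) := by
      rw [hs_eq]; ring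
    rw [e, div_le_iff₀ hDpos]
    nlinarith
  have hs_pos : 0 < s := by rw [hs_eq]; positivity
  have hx_nn : 0 ≤ Real.log lam * (2 * s) := by positivity
  have hterm1 : Real.exp (Real.log lam * (-(2 * s))) ≥ 0.88134 := by
    have e1 : Real.log lam * (-(2 * s)) =
        (-(Real.log lam * (2 * s) / 2)) + (-(Real.log lam * (2 * s) / 2)) := by ring
    rw [e1, Real.exp_add]
    have hlb : 1 - Real.log lam * (2 * s) / 2 ≤
        Real.exp (-(Real.log lam * (2 * s) / 2)) := by
      have := Real.add_one_le_exp (-(Real.log lam * (2 * s) / 2))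
      linarith
    have hge0 : (0:ℝ) ≤ 1 - Real.log lam * (2 * s) / 2 := by linarith
    nlinarith [mul_le_mul hlb hlb hge0 (le_of_lt (Real.exp_pos _)),
      sq_nonneg (0.1224 - Real.log lam * (2 * s))]
  -- second term
  have h2q : (4096:ℝ) ≤ (2:ℝ) ^ q := by
    calc (4096:ℝ) = 2 ^ 12 := by norm_num
    _ ≤ (2:ℝ) ^ q := pow_le_pow_right₀ (by norm_num) hq
  have hB0 : (0:ℝ) < (2:ℝ) ^ q + lam - 1 := by linarith
  have hy_def : ((2:ℝ) ^ q + lam - 1) ^ (-(2 * s)) =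
      Real.exp (Real.log ((2:ℝ) ^ q + lam - 1) * (-(2 * s))) :=
    Real.rpow_def_of_pos hB0 _
  have hlogB : Real.log ((2:ℝ) ^ q + lam - 1) ≤ (q:ℝ) * Real.log 2 + 0.0002 := by
    have hBle : (2:ℝ) ^ q + lam - 1 ≤ (2:ℝ) ^ q * 1.0002 := by nlinarith
    have h1 : Real.log ((2:ℝ) ^ q + lam - 1) ≤ Real.log ((2:ℝ) ^ q * 1.0002) :=
      Real.log_le_log hB0 hBle
    have h2 : Real.log ((2:ℝ) ^ q * 1.0002) = (q:ℝ) * Real.log 2 + Real.log 1.0002 := by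
      rw [Real.log_mul (by positivity) (by norm_num), Real.log_pow]
    have h3 : Real.log 1.0002 ≤ 0.0002 := by
      have := Real.log_le_sub_one_of_pos (show (0:ℝ) < 1.0002 by norm_num)
      linarith
    linarith
  have hlogB_nn : 0 ≤ Real.log ((2:ℝ) ^ q + lam - 1) := by
    apply Real.log_nonneg; linarith
  have hy_ub : Real.log ((2:ℝ) ^ q + lam - 1) * (2 * s) ≤ 2.1143 := by
    have e : Real.log ((2:ℝ) ^ q + lam - 1) * (2 * s) =
        (2.1142 * Real.log ((2:ℝ) ^ q + lam - 1)) / ((q:ℝ) * Real.log 2) := by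
      rw [hs_eq]; ring
    rw [e, div_le_iff₀ hDpos]
    nlinarith
  have hexp1 : Real.exp 1 < 2.7182818286 := Real.exp_one_lt_d9
  have hexp1_pos : (0:ℝ) < Real.exp 1 := Real.exp_pos 1
  have hexp_small : Real.exp 0.1143 ≤ 1 / 0.8857 := by
    have hmul : Real.exp 0.1143 * Real.exp (-0.1143) = 1 := by
      rw [← Real.exp_add]; norm_num
    have hlb : (0.8857:ℝ) ≤ Real.exp (-0.1143) := by
      have := Real.add_one_le_exp (-0.1143:ℝ); linarith
    rw [le_div_iff₀ (by norm_num : (0:ℝ) < 0.8857)]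
    nlinarith [Real.exp_pos (0.1143:ℝ),
      mul_le_mul_of_nonneg_left hlb (le_of_lt (Real.exp_pos (0.1143:ℝ)))]
  have hexpY : Real.exp 2.1143 ≤ 8.3427 := by
    have he : Real.exp (2.1143 : ℝ) = Real.exp 1 * Real.exp 1 * Real.exp 0.1143 := by
      rw [← Real.exp_add, ← Real.exp_add]; norm_num
    rw [he]
    have hb : (0:ℝ) < Real.exp 0.1143 := Real.exp_pos _
    nlinarith
  have hterm2 : Real.exp (Real.log ((2:ℝ) ^ q + lam - 1) * (-(2 * s))) ≥ 0.11986 := by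
    have h1 : Real.exp (-(2.1143:ℝ)) ≤
        Real.exp (Real.log ((2:ℝ) ^ q + lam - 1) * (-(2 * s))) := by
      apply Real.exp_le_exp.mpr
      nlinarith
    have hmul2 : Real.exp (2.1143:ℝ) * Real.exp (-(2.1143:ℝ)) = 1 := by
      rw [← Real.exp_add]; norm_num
    have h2 : (0.11986:ℝ) ≤ Real.exp (-(2.1143:ℝ)) := by
      nlinarith [Real.exp_pos (-(2.1143:ℝ)), hexpY, hmul2,
        mul_le_mul_of_nonneg_left hexpY (le_of_lt (Real.exp_pos (-(2.1143:ℝ))))]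
    linarith
  rw [hx_def, hy_def]
  linarith
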